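/- Let (I_n)_{n≥0} be a martingale with values in [0,1] (with respect to some filtration) such that |I_{n+1} − I_n| → 0 in L¹ and such that there exists a function ε: (0,1/2) → (0,∞) with the property: almost surely, for every n, if I_n ∈ (δ, 1−δ) then E[|I_{n+1} − I_n| | F_n] ≥ ε(δ)/2. Then I_n converges almost surely to a random variable I_∞ ∈ {0,1}, and P[I_∞ = 1] = E[I_0]. -/

import Mathlib

open MeasureTheory Filter

/-- Let `(I_n)` be a `[0,1]`-valued martingale such that
`E[|I_{n+1} − I_n|] → 0` and such that there is `ε : (0,1/2) → (0,∞)` with: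
almost surely, for every `n` and `δ`, if `I_n ∈ (δ, 1−δ)` then
`E[|I_{n+1} − I_n| | ℱ_n] ≥ ε(δ)/2`. Then `I_n` converges a.s. to a random
variable `I_∞` taking values in `{0,1}`, with `P[I_∞ = 1] = E[I_0]`. -/
theorem stmt18 {Ω : Type*} {m : MeasurableSpace Ω} (μ : Measure Ω)
    [IsProbabilityMeasure μ] (ℱ : Filtration ℕ m) (I : ℕ → Ω → ℝ)
    (hmart : Martingale I ℱ μ)
    (hbdd : ∀ n, ∀ ω, I n ω ∈ Set.Icc (0 : ℝ) 1)
    (hL1 : Tendsto (fun n => ∫ ω, |I (n + 1) ω - I n ω| ∂μ) atTop (nhds 0))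
    (ε : ℝ → ℝ) (hε : ∀ δ ∈ Set.Ioo (0 : ℝ) (1 / 2), 0 < ε δ)
    (hgap : ∀ᵐ ω ∂μ, ∀ n, ∀ δ ∈ Set.Ioo (0 : ℝ) (1 / 2),
      I n ω ∈ Set.Ioo δ (1 - δ) →
      ε δ / 2 ≤ (μ[fun ω' => |I (n + 1) ω' - I n ω'| | ℱ n]) ω) :
    ∃ Ilim : Ω → ℝ,
      (∀ᵐ ω ∂μ, Tendsto (fun n => I n ω) atTop (nhds (Ilim ω))) ∧
      (∀ᵐ ω ∂μ, Ilim ω = 0 ∨ Ilim ω = 1) ∧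
      (μ {ω | Ilim ω = 1}).toReal = ∫ ω, I 0 ω ∂μ := by
  classical
  set Ilim := ℱ.limitProcess I μ with hIlimdef
  have hItot : ∀ n, Integrable (I n) μ := fun n => hmart.integrable n
  have hΔint : ∀ n, Integrable (fun ω => |I (n + 1) ω - I n ω|) μ :=
    fun n => ((hItot (n + 1)).sub (hItot n)).abs
  have hbdd1 : ∀ n, eLpNorm (I n) 1 μ ≤ ((1 : NNReal) : ENNReal) := by
    intro n
    have h := eLpNorm_le_of_ae_bound (p := 1) (μ := μ) (f := I n) (C := 1)
      (ae_of_all _ fun ω => by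
        have h := hbdd n ω
        rw [Real.norm_eq_abs, abs_le]
        exact ⟨by linarith [h.1], h.2⟩)
    simpa using h
  have hconv : ∀ᵐ ω ∂μ, Tendsto (fun n => I n ω) atTop (nhds (Ilim ω)) :=
    hmart.submartingale.ae_tendsto_limitProcess hbdd1
  -- measure of the middle region tends to 0
  have hA : ∀ δ, δ ∈ Set.Ioo (0 : ℝ) (1 / 2) →
      Tendsto (fun n => (μ {ω | I n ω ∈ Set.Ioo δ (1 - δ)}).toReal) atTop (nhds 0) := by
    intro δ hδ
    have hεδ := hε δ hδ
    have key : ∀ n, ε δ / 2 * (μ {ω | I n ω ∈ Set.Ioo δ (1 - δ)}).toReal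
        ≤ ∫ ω, |I (n + 1) ω - I n ω| ∂μ := by
      intro n
      set A := {ω | I n ω ∈ Set.Ioo δ (1 - δ)} with hAdef
      have hAmeas' : MeasurableSet[ℱ n] A :=
        (hmart.stronglyAdapted n).measurable measurableSet_Ioo
      have hAmeas : MeasurableSet A := ℱ.le n A hAmeas'
      have h1 : ∫ _ in A, (ε δ / 2) ∂μ
          ≤ ∫ ω in A, (μ[fun ω' => |I (n + 1) ω' - I n ω'| | ℱ n]) ω ∂μ := by
        refine setIntegral_mono_on_ae (integrableOn_const (measure_ne_top μ A))
          integrable_condExp.integrableOn hAmeas ?_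
        filter_upwards [hgap] with ω hω hmem
        exact hω n δ hδ hmem
      have h2 : ∫ ω in A, (μ[fun ω' => |I (n + 1) ω' - I n ω'| | ℱ n]) ω ∂μ
          = ∫ ω in A, |I (n + 1) ω - I n ω| ∂μ :=
        setIntegral_condExp (ℱ.le n) (hΔint n) hAmeas'
      have h3 : ∫ ω in A, |I (n + 1) ω - I n ω| ∂μ ≤ ∫ ω, |I (n + 1) ω - I n ω| ∂μ :=
        setIntegral_le_integral (hΔint n) (ae_of_all _ fun ω => abs_nonneg _)
      have h4 : ∫ _ in A, (ε δ / 2) ∂μ = (μ A).toReal * (ε δ / 2) := by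
        rw [setIntegral_const, smul_eq_mul, measureReal_def]
      rw [h2] at h1
      nlinarith [h1, h3]
    have hsq : ∀ n, (μ {ω | I n ω ∈ Set.Ioo δ (1 - δ)}).toReal
        ≤ 2 / ε δ * ∫ ω, |I (n + 1) ω - I n ω| ∂μ := by
      intro n
      have h := mul_le_mul_of_nonneg_left (key n) (le_of_lt (by positivity : (0:ℝ) < 2 / ε δ))
      have heq : 2 / ε δ * (ε δ / 2 * (μ {ω | I n ω ∈ Set.Ioo δ (1 - δ)}).toReal)
          = (μ {ω | I n ω ∈ Set.Ioo δ (1 - δ)}).toReal := by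
        field_simp
      linarith [h, heq.ge]
    have hlim : Tendsto (fun n => 2 / ε δ * ∫ ω, |I (n + 1) ω - I n ω| ∂μ) atTop (nhds 0) := by
      simpa using hL1.const_mul (2 / ε δ)
    exact squeeze_zero (fun n => ENNReal.toReal_nonneg) hsq hlim
  -- the limit avoids any closed middle interval
  have hmid : ∀ δ, δ ∈ Set.Ioo (0 : ℝ) (1 / 2) →
      ∀ᵐ ω ∂μ, Ilim ω ∉ Set.Icc (2 * δ) (1 - 2 * δ) := by
    intro δ hδ
    set C : ℕ → Set Ω := fun N => ⋂ n, ⋂ (_ : N ≤ n), {ω | I n ω ∈ Set.Ioo δ (1 - δ)} with hC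
    have hCnull : ∀ N, μ (C N) = 0 := by
      intro N
      have hle : ∀ n ≥ N, (μ (C N)).toReal ≤ (μ {ω | I n ω ∈ Set.Ioo δ (1 - δ)}).toReal := by
        intro n hn
        exact ENNReal.toReal_mono (measure_ne_top μ _)
          (measure_mono (Set.iInter_subset_of_subset n (Set.iInter_subset _ hn)))
      have h0 : (μ (C N)).toReal ≤ 0 :=
        ge_of_tendsto (hA δ hδ) (eventually_atTop.2 ⟨N, hle⟩)
      have h0' : (μ (C N)).toReal = 0 := le_antisymm h0 ENNReal.toReal_nonneg
      exact ((ENNReal.toReal_eq_zero_iff _).1 h0').resolve_right (measure_ne_top μ _)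
    have hUnull : μ (⋃ N, C N) = 0 := measure_iUnion_null hCnull
    filter_upwards [hconv, measure_eq_zero_iff_ae_notMem.1 hUnull] with ω hω hU hmem
    have h1 : Set.Ioo δ (1 - δ) ∈ nhds (Ilim ω) :=
      Ioo_mem_nhds (by linarith [hmem.1, hδ.1]) (by linarith [hmem.2, hδ.1])
    obtain ⟨N, hN⟩ := eventually_atTop.1 (hω.eventually h1)
    exact hU (Set.mem_iUnion.2 ⟨N, Set.mem_iInter.2 fun n => Set.mem_iInter.2 fun hn => hN n hn⟩)
  have hIcc : ∀ᵐ ω ∂μ, Ilim ω ∈ Set.Icc (0 : ℝ) 1 := by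
    filter_upwards [hconv] with ω hω
    exact ⟨ge_of_tendsto hω (Eventually.of_forall fun n => (hbdd n ω).1),
      le_of_tendsto hω (Eventually.of_forall fun n => (hbdd n ω).2)⟩
  have hmidall : ∀ᵐ ω ∂μ, ∀ k : ℕ,
      Ilim ω ∉ Set.Icc (1 / ((k : ℝ) + 2)) (1 - 1 / ((k : ℝ) + 2)) := by
    rw [ae_all_iff]
    intro k
    have hk2 : (0 : ℝ) < (k : ℝ) + 2 := by positivity
    have hδmem : (1 / (2 * ((k : ℝ) + 2))) ∈ Set.Ioo (0 : ℝ) (1 / 2) := by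
      constructor
      · positivity
      · rw [div_lt_div_iff₀ (by positivity) (by norm_num)]
        have : (0 : ℝ) ≤ (k : ℝ) := Nat.cast_nonneg k
        linarith
    have h := hmid _ hδmem
    have heq : 2 * (1 / (2 * ((k : ℝ) + 2))) = 1 / ((k : ℝ) + 2) := by
      field_simp
    rwa [heq] at h
  have h01 : ∀ᵐ ω ∂μ, Ilim ω = 0 ∨ Ilim ω = 1 := by
    filter_upwards [hIcc, hmidall] with ω h1 h2
    by_contra h
    push_neg at h
    obtain ⟨h0, hone⟩ := h
    have hx0 : 0 < Ilim ω := lt_of_le_of_ne h1.1 (Ne.symm h0)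
    have hx1 : Ilim ω < 1 := lt_of_le_of_ne h1.2 hone
    obtain ⟨k, hk⟩ := exists_nat_one_div_lt (show 0 < min (Ilim ω) (1 - Ilim ω) by
      exact lt_min hx0 (by linarith))
    have ha : 1 / ((k : ℝ) + 2) ≤ 1 / ((k : ℝ) + 1) :=
      one_div_le_one_div_of_le (by positivity) (by linarith)
    have hmin1 := min_le_left (Ilim ω) (1 - Ilim ω)
    have hmin2 := min_le_right (Ilim ω) (1 - Ilim ω)
    exact h2 k ⟨by linarith, by linarith⟩
  -- integral computation
  have hint_eq : ∀ n, ∫ ω, I n ω ∂μ = ∫ ω, I 0 ω ∂μ := by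
    intro n
    calc ∫ ω, I n ω ∂μ = ∫ ω, (μ[I n | ℱ 0]) ω ∂μ := (integral_condExp (ℱ.le 0)).symm
      _ = ∫ ω, I 0 ω ∂μ := integral_congr_ae (hmart.condExp_ae_eq (Nat.zero_le n))
  have htendint : Tendsto (fun n => ∫ ω, I n ω ∂μ) atTop (nhds (∫ ω, Ilim ω ∂μ)) := by
    refine tendsto_integral_of_dominated_convergence (fun _ => (1 : ℝ))
      (fun n => (hItot n).aestronglyMeasurable) (integrable_const 1)
      (fun n => ae_of_all _ fun ω => ?_) hconv
    show ‖I n ω‖ ≤ 1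
    rw [Real.norm_eq_abs, abs_le]
    exact ⟨by linarith [(hbdd n ω).1], (hbdd n ω).2⟩
  have hlim_eq : ∫ ω, Ilim ω ∂μ = ∫ ω, I 0 ω ∂μ := by
    refine tendsto_nhds_unique htendint ?_
    simp only [hint_eq]
    exact tendsto_const_nhds
  have hSmeas : MeasurableSet {ω | Ilim ω = 1} :=
    (MeasureTheory.Filtration.stronglyMeasurable_limit_process'
      (f := I) (ℱ := ℱ) (μ := μ)).measurable (measurableSet_singleton 1)
  have hind : ∫ ω, Ilim ω ∂μ = (μ {ω | Ilim ω = 1}).toReal := by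
    have hcongr : Ilim =ᵐ[μ] Set.indicator {ω | Ilim ω = 1} (fun _ => (1 : ℝ)) := by
      filter_upwards [h01] with ω hω
      rcases hω with h | h
      · rw [Set.indicator_of_notMem, h]
        simp only [Set.mem_setOf_eq, h]
        norm_num
      · rw [Set.indicator_of_mem, h]
        exact h
    rw [integral_congr_ae hcongr, integral_indicator hSmeas, setIntegral_const, smul_eq_mul,
      mul_one, measureReal_def]
  exact ⟨Ilim, hconv, h01, by rw [← hind, hlim_eq]⟩
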